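/- arXiv:1601.00397 — 5 statements merged into one kernel-verified Lean document; each statement's English description precedes it below -/
import Mathlib

section
/- The function t ↦ Σ_{i=0}^∞ f_{W_ℓ}(t + iΔ), where f_{W_ℓ} is the Erlang(ℓ, ω) density, converges pointwise on [0, Δ) to the constant 1/Δ as ℓ → ∞. -/
open Real Filter MeasureTheory Set Topology

namespace ErlangAux

noncomputable def f (ω : ℝ) (m : ℕ) (x : ℝ) : ℝ :=
  ω ^ (m + 2) * (x ^ (m + 1) * Real.exp (-ω * x)) / (Nat.factorial (m + 1))

noncomputable def d (ω : ℝ) (m : ℕ) (x : ℝ) : ℝ :=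
  ω ^ (m + 2) * (x ^ m * Real.exp (-ω * x) * (((m : ℝ) + 1) - ω * x)) / (Nat.factorial (m + 1))

noncomputable def g (ω r : ℝ) (m : ℕ) (x : ℝ) : ℝ :=
  ω ^ (m + 2) * (x ^ m * Real.exp (-ω * x) *
    (r / 2 + (((m : ℝ) + 1) - ω * x) ^ 2 / (2 * r))) / (Nat.factorial (m + 1))

variable {ω r Δ t : ℝ} {m : ℕ}

lemma cont_f : Continuous (f ω m) := by unfold f; fun_prop
lemma cont_d : Continuous (d ω m) := by unfold d; fun_prop
lemma cont_g : Continuous (g ω r m) := by unfold g; fun_prop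

lemma integrableOn_pow_exp (hω : 0 < ω) (k : ℕ) :
    IntegrableOn (fun x : ℝ => x ^ k * Real.exp (-ω * x)) (Ioi 0) := by
  have h := integrableOn_rpow_mul_exp_neg_mul_rpow (p := 1) (s := (k : ℝ)) (b := ω)
    (lt_of_lt_of_le neg_one_lt_zero (Nat.cast_nonneg k)) one_pos hω
  refine h.congr_fun (fun x _ => ?_) measurableSet_Ioi
  simp only [Real.rpow_one, Real.rpow_natCast]

lemma integral_pow_exp (hω : 0 < ω) (k : ℕ) :
    ∫ x in Ioi (0 : ℝ), x ^ k * Real.exp (-ω * x) = (Nat.factorial k) / ω ^ (k + 1) := by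
  have h := integral_rpow_mul_exp_neg_mul_Ioi (a := (k : ℝ) + 1) (r := ω) (by positivity) hω
  rw [add_sub_cancel_right] at h
  have h2 : ∫ x in Ioi (0 : ℝ), x ^ k * Real.exp (-ω * x)
      = ∫ t in Ioi (0 : ℝ), t ^ ((k : ℝ)) * Real.exp (-(ω * t)) := by
    refine setIntegral_congr_fun measurableSet_Ioi (fun x _ => ?_)
    rw [Real.rpow_natCast, neg_mul]
  rw [h2, h]
  have : ((k : ℝ) + 1) = ((k + 1 : ℕ) : ℝ) := by push_cast; ring
  rw [this, Real.rpow_natCast, ← this, Real.Gamma_nat_eq_factorial]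
  rw [div_pow, one_pow]
  field_simp

lemma g_nonneg (hω : 0 < ω) (hr : 0 < r) {x : ℝ} (hx : 0 ≤ x) : 0 ≤ g ω r m x := by
  unfold g
  have h1 : (0:ℝ) ≤ r / 2 + (((m : ℝ) + 1) - ω * x) ^ 2 / (2 * r) := by positivity
  positivity

lemma f_nonneg (hω : 0 < ω) {x : ℝ} (hx : 0 ≤ x) : 0 ≤ f ω m x := by
  unfold f; positivity

lemma abs_d_le (hω : 0 < ω) (hr : 0 < r) {x : ℝ} (hx : 0 ≤ x) :
    |d ω m x| ≤ g ω r m x := by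
  have key : |(((m : ℝ) + 1) - ω * x)| ≤ r / 2 + (((m : ℝ) + 1) - ω * x) ^ 2 / (2 * r) := by
    have key2 : 2 * r * |(((m : ℝ) + 1) - ω * x)| ≤ r * r + (((m : ℝ) + 1) - ω * x) ^ 2 := by
      nlinarith [sq_nonneg (|(((m : ℝ) + 1) - ω * x)| - r), sq_abs (((m : ℝ) + 1) - ω * x)]
    have hrw : r / 2 + (((m : ℝ) + 1) - ω * x) ^ 2 / (2 * r)
        = (r * r + (((m : ℝ) + 1) - ω * x) ^ 2) / (2 * r) := by
      field_simp
    rw [hrw, le_div_iff₀ (by positivity)]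
    linarith
  have h1 : |d ω m x| = ω ^ (m + 2) * (x ^ m * Real.exp (-ω * x) *
      |(((m : ℝ) + 1) - ω * x)|) / (Nat.factorial (m + 1)) := by
    unfold d
    rw [abs_div, abs_mul, abs_mul, abs_mul, abs_of_nonneg (pow_nonneg hω.le _),
      abs_of_nonneg (pow_nonneg hx _), abs_of_nonneg (Real.exp_pos _).le,
      abs_of_nonneg (by positivity : (0:ℝ) ≤ ((Nat.factorial (m + 1) : ℝ)))]
  rw [h1]
  unfold g
  have hden : (0:ℝ) < (Nat.factorial (m + 1) : ℝ) := by positivity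
  rw [div_le_div_iff_of_pos_right hden]
  refine mul_le_mul_of_nonneg_left ?_ (by positivity)
  exact mul_le_mul_of_nonneg_left key (by positivity)

lemma hasDerivAt_f (x : ℝ) : HasDerivAt (f ω m) (d ω m x) x := by
  have h : HasDerivAt (fun y : ℝ => y ^ (m + 1) * Real.exp (-ω * y))
      ((((m : ℝ) + 1) * x ^ m) * Real.exp (-ω * x)
        + x ^ (m + 1) * (Real.exp (-ω * x) * (-ω * 1))) x := by
    have hp : HasDerivAt (fun y : ℝ => y ^ (m + 1)) (((m : ℝ) + 1) * x ^ m) x := by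
      simpa using hasDerivAt_pow (m + 1) x
    have he : HasDerivAt (fun y : ℝ => Real.exp (-ω * y)) (Real.exp (-ω * x) * (-ω * 1)) x :=
      ((hasDerivAt_id x).const_mul (-ω)).exp
    exact hp.mul he
  have h2 := (h.const_mul (ω ^ (m + 2))).div_const ((Nat.factorial (m + 1) : ℝ))
  have : HasDerivAt (f ω m)
      (ω ^ (m + 2) * ((((m : ℝ) + 1) * x ^ m) * Real.exp (-ω * x)
        + x ^ (m + 1) * (Real.exp (-ω * x) * (-ω * 1))) / (Nat.factorial (m + 1))) x := h2
  convert this using 1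
  unfold d
  rw [pow_succ]
  ring

lemma g_decomp (hr : r ≠ 0) (x : ℝ) : g ω r m x =
    (ω ^ (m + 2) / (Nat.factorial (m + 1)) * (r / 2 + ((m : ℝ) + 1) ^ 2 / (2 * r)))
        * (x ^ m * Real.exp (-ω * x))
      + ((ω ^ (m + 2) / (Nat.factorial (m + 1)) * (-(((m : ℝ) + 1) * ω) / r))
          * (x ^ (m + 1) * Real.exp (-ω * x))
        + (ω ^ (m + 2) / (Nat.factorial (m + 1)) * (ω ^ 2 / (2 * r)))
          * (x ^ (m + 2) * Real.exp (-ω * x))) := by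
  unfold g
  have hfac : ((Nat.factorial (m + 1) : ℝ)) ≠ 0 := by positivity
  field_simp
  ring

lemma integrableOn_g (hω : 0 < ω) (hr : 0 < r) : IntegrableOn (g ω r m) (Ioi 0) := by
  have h : IntegrableOn (fun x : ℝ =>
      (ω ^ (m + 2) / (Nat.factorial (m + 1)) * (r / 2 + ((m : ℝ) + 1) ^ 2 / (2 * r)))
          * (x ^ m * Real.exp (-ω * x))
        + ((ω ^ (m + 2) / (Nat.factorial (m + 1)) * (-(((m : ℝ) + 1) * ω) / r))
            * (x ^ (m + 1) * Real.exp (-ω * x))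
          + (ω ^ (m + 2) / (Nat.factorial (m + 1)) * (ω ^ 2 / (2 * r)))
            * (x ^ (m + 2) * Real.exp (-ω * x)))) (Ioi 0) :=
    (((integrableOn_pow_exp hω m).const_mul _).add
      (((integrableOn_pow_exp hω (m + 1)).const_mul _).add
        ((integrableOn_pow_exp hω (m + 2)).const_mul _)))
  exact h.congr (ae_of_all _ fun x => (g_decomp hr.ne' x).symm)

lemma integral_g (hω : 0 < ω) (hr : 0 < r) :
    ∫ x in Ioi (0 : ℝ), g ω r m x = ω * r / (2 * ((m : ℝ) + 1)) + ω / (2 * r) := by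
  simp only [g_decomp hr.ne']
  have hi0 : Integrable (fun x : ℝ =>
      (ω ^ (m + 2) / (Nat.factorial (m + 1)) * (r / 2 + ((m : ℝ) + 1) ^ 2 / (2 * r)))
        * (x ^ m * Real.exp (-ω * x))) (volume.restrict (Ioi 0)) :=
    (integrableOn_pow_exp hω m).const_mul _
  have hi1 : Integrable (fun x : ℝ =>
      (ω ^ (m + 2) / (Nat.factorial (m + 1)) * (-(((m : ℝ) + 1) * ω) / r))
        * (x ^ (m + 1) * Real.exp (-ω * x))) (volume.restrict (Ioi 0)) :=
    (integrableOn_pow_exp hω (m + 1)).const_mul _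
  have hi2 : Integrable (fun x : ℝ =>
      (ω ^ (m + 2) / (Nat.factorial (m + 1)) * (ω ^ 2 / (2 * r)))
        * (x ^ (m + 2) * Real.exp (-ω * x))) (volume.restrict (Ioi 0)) :=
    (integrableOn_pow_exp hω (m + 2)).const_mul _
  have hi12 : Integrable (fun x : ℝ =>
      (ω ^ (m + 2) / (Nat.factorial (m + 1)) * (-(((m : ℝ) + 1) * ω) / r))
          * (x ^ (m + 1) * Real.exp (-ω * x))
        + (ω ^ (m + 2) / (Nat.factorial (m + 1)) * (ω ^ 2 / (2 * r)))
          * (x ^ (m + 2) * Real.exp (-ω * x))) (volume.restrict (Ioi 0)) := hi1.add hi2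
  rw [integral_add hi0 hi12, integral_add hi1 hi2,
    integral_const_mul, integral_const_mul, integral_const_mul,
    integral_pow_exp hω m, integral_pow_exp hω (m + 1), integral_pow_exp hω (m + 2)]
  have hf1 : ((Nat.factorial (m + 1) : ℝ)) = ((m : ℝ) + 1) * (Nat.factorial m) := by
    rw [Nat.factorial_succ]; push_cast; ring
  have hf2 : ((Nat.factorial (m + 2) : ℝ)) = ((m : ℝ) + 2) * (((m : ℝ) + 1) * (Nat.factorial m)) := by
    rw [Nat.factorial_succ, Nat.factorial_succ]; push_cast; ring
  have hfac : ((Nat.factorial m : ℝ)) ≠ 0 := by positivity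
  have hm1 : ((m : ℝ) + 1) ≠ 0 := by positivity
  have hω' : ω ≠ 0 := hω.ne'
  rw [hf1, hf2]
  field_simp
  ring

lemma integral_f (hω : 0 < ω) : ∫ x in Ioi (0 : ℝ), f ω m x = 1 := by
  have : ∫ x in Ioi (0 : ℝ), f ω m x
      = ∫ x in Ioi (0 : ℝ), (ω ^ (m + 2) / (Nat.factorial (m + 1)))
          * (x ^ (m + 1) * Real.exp (-ω * x)) := by
    refine setIntegral_congr_fun measurableSet_Ioi (fun x _ => ?_)
    unfold f; ring
  rw [this, integral_const_mul, integral_pow_exp hω (m + 1)]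
  have hfac : ((Nat.factorial (m + 1) : ℝ)) ≠ 0 := by positivity
  have hω' : ω ≠ 0 := hω.ne'
  field_simp

lemma integrableOn_f (hω : 0 < ω) : IntegrableOn (f ω m) (Ioi 0) := by
  have h := (integrableOn_pow_exp hω (m + 1)).const_mul (ω ^ (m + 2) / (Nat.factorial (m + 1)))
  refine h.congr (ae_of_all _ fun x => ?_)
  unfold f; ring

lemma key_interval (hω : 0 < ω) (hr : 0 < r) {a b : ℝ} (ha : 0 ≤ a) (hab : a ≤ b) :
    |(∫ x in a..b, f ω m x) - (b - a) * f ω m a| ≤ (b - a) * ∫ x in a..b, g ω r m x := by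
  have step : ∀ x ∈ Icc a b, |f ω m x - f ω m a| ≤ ∫ y in a..b, g ω r m y := by
    intro x hx
    have hax : a ≤ x := hx.1
    have hxb : x ≤ b := hx.2
    have ftc : (∫ y in a..x, d ω m y) = f ω m x - f ω m a :=
      intervalIntegral.integral_eq_sub_of_hasDerivAt (fun y _ => hasDerivAt_f y)
        (cont_d.intervalIntegrable a x)
    rw [← ftc]
    calc |∫ y in a..x, d ω m y| ≤ ∫ y in a..x, |d ω m y| :=
          intervalIntegral.abs_integral_le_integral_abs hax
      _ ≤ ∫ y in a..x, g ω r m y := by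
          refine intervalIntegral.integral_mono_on hax
            (cont_d.abs.intervalIntegrable a x) (cont_g.intervalIntegrable a x) ?_
          intro y hy
          exact abs_d_le hω hr (ha.trans hy.1)
      _ ≤ ∫ y in a..b, g ω r m y := by
          rw [← intervalIntegral.integral_add_adjacent_intervals
            (cont_g.intervalIntegrable a x) (cont_g.intervalIntegrable x b)]
          have h0 : 0 ≤ ∫ y in x..b, g ω r m y := by
            refine intervalIntegral.integral_nonneg hxb (fun u hu => ?_)
            exact g_nonneg hω hr (ha.trans (hax.trans hu.1))
          linarith
  have heq : (∫ x in a..b, f ω m x) - (b - a) * f ω m a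
      = ∫ x in a..b, (f ω m x - f ω m a) := by
    rw [intervalIntegral.integral_sub (cont_f.intervalIntegrable a b)
      (intervalIntegrable_const), intervalIntegral.integral_const, smul_eq_mul]
  rw [heq]
  calc |∫ x in a..b, (f ω m x - f ω m a)| ≤ ∫ x in a..b, |f ω m x - f ω m a| :=
        intervalIntegral.abs_integral_le_integral_abs hab
    _ ≤ ∫ x in a..b, (∫ y in a..b, g ω r m y) := by
        refine intervalIntegral.integral_mono_on hab
          ((cont_f.sub continuous_const).abs.intervalIntegrable a b)
          (intervalIntegrable_const) step
    _ = (b - a) * ∫ y in a..b, g ω r m y := by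
        rw [intervalIntegral.integral_const, smul_eq_mul]

lemma summable_f (hω : 0 < ω) (hΔ : 0 < Δ) (ht : 0 ≤ t) (htΔ : t ≤ Δ) :
    Summable (fun i : ℕ => f ω m (t + i * Δ)) := by
  set q := Real.exp (-ω * Δ) with hq
  have hq0 : 0 < q := Real.exp_pos _
  have hq1 : q < 1 := by
    rw [hq, Real.exp_lt_one_iff]
    nlinarith
  have base : Summable (fun i : ℕ => ((i : ℝ)) ^ (m + 1) * q ^ i) :=
    summable_pow_mul_geometric_of_norm_lt_one (m + 1)
      (by rwa [Real.norm_eq_abs, abs_of_pos hq0])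
  have shifted : Summable (fun i : ℕ => (((i : ℝ) + 1)) ^ (m + 1) * q ^ (i + 1)) := by
    have := (summable_nat_add_iff 1).2 base
    refine this.congr (fun i => ?_)
    push_cast
    ring
  have shifted' : Summable (fun i : ℕ => (((i : ℝ) + 1)) ^ (m + 1) * q ^ i) := by
    have h := shifted.mul_left q⁻¹
    refine h.congr fun i => ?_
    rw [pow_succ q i]
    field_simp
  have shifted2 : Summable (fun i : ℕ =>
      (ω ^ (m + 2) * Δ ^ (m + 1) * Real.exp (-ω * t) / (Nat.factorial (m + 1)))
        * ((((i : ℝ) + 1)) ^ (m + 1) * q ^ i)) := shifted'.mul_left _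
  refine Summable.of_nonneg_of_le (fun i => ?_) (fun i => ?_) shifted2
  · exact f_nonneg hω (by positivity)
  · unfold f
    have hx : (0:ℝ) ≤ t + i * Δ := by positivity
    have h1 : (t + i * Δ) ^ (m + 1) ≤ (((i : ℝ) + 1) * Δ) ^ (m + 1) := by
      refine pow_le_pow_left₀ hx ?_ _
      nlinarith [Nat.cast_nonneg (α := ℝ) i]
    have h2 : Real.exp (-ω * (t + i * Δ)) = Real.exp (-ω * t) * q ^ i := by
      rw [hq, ← Real.exp_nat_mul, ← Real.exp_add]
      congr 1
      ring
    rw [h2]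
    calc ω ^ (m + 2) * ((t + i * Δ) ^ (m + 1) * (Real.exp (-ω * t) * q ^ i))
          / (Nat.factorial (m + 1))
        = (t + i * Δ) ^ (m + 1)
          * (ω ^ (m + 2) * Real.exp (-ω * t) * q ^ i / (Nat.factorial (m + 1))) := by ring
      _ ≤ (((i : ℝ) + 1) * Δ) ^ (m + 1)
          * (ω ^ (m + 2) * Real.exp (-ω * t) * q ^ i / (Nat.factorial (m + 1))) :=
          mul_le_mul_of_nonneg_right h1 (by positivity)
      _ = (ω ^ (m + 2) * Δ ^ (m + 1) * Real.exp (-ω * t) / (Nat.factorial (m + 1)))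
          * ((((i : ℝ) + 1)) ^ (m + 1) * q ^ i) := by rw [mul_pow]; ring


lemma abs_bound (hω : 0 < ω) (hΔ : 0 < Δ) (ht : 0 ≤ t) (htΔ : t ≤ Δ) (m : ℕ) :
    |(∑' i : ℕ, f ω m (t + i * Δ)) - 1 / Δ| ≤
      (ω * Real.sqrt ((m : ℝ) + 1) / (2 * ((m : ℝ) + 1)) + ω / (2 * Real.sqrt ((m : ℝ) + 1)))
        + ω ^ (m + 2) * Δ ^ (m + 1) / (Nat.factorial (m + 1)) := by
  set r := Real.sqrt ((m : ℝ) + 1) with hrdef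
  have hr : 0 < r := Real.sqrt_pos.mpr (by positivity)
  set Ig : ℝ := ω * r / (2 * ((m : ℝ) + 1)) + ω / (2 * r) with hIgdef
  set M1 : ℝ := ω ^ (m + 2) * Δ ^ (m + 1) / (Nat.factorial (m + 1)) with hM1def
  set S : ℝ := ∑' i : ℕ, f ω m (t + i * Δ) with hSdef
  set a : ℕ → ℝ := fun i => t + i * Δ with hadef
  have h0 : ∀ k : ℕ, (0:ℝ) ≤ a k := fun k => add_nonneg ht (by positivity)
  have hstep : ∀ k : ℕ, a (k + 1) - a k = Δ := by
    intro k
    simp only [hadef]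
    push_cast
    ring
  have hle : ∀ k : ℕ, a k ≤ a (k + 1) := fun k => by have := hstep k; linarith
  have ha0 : a 0 = t := by simp [hadef]
  have htaN : ∀ N : ℕ, t ≤ a N := by
    intro N
    have : (0:ℝ) ≤ (N : ℝ) * Δ := by positivity
    simp only [hadef]
    linarith
  have key : ∀ N : ℕ,
      |(∫ x in t..(a N), f ω m x) - Δ * ∑ i ∈ Finset.range N, f ω m (a i)| ≤ Δ * Ig := by
    intro N
    have htel_f := intervalIntegral.sum_integral_adjacent_intervals (μ := volume) (a := a)
      (n := N) (f := f ω m) (fun k _ => cont_f.intervalIntegrable _ _)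
    have htel_g := intervalIntegral.sum_integral_adjacent_intervals (μ := volume) (a := a)
      (n := N) (f := g ω r m) (fun k _ => cont_g.intervalIntegrable _ _)
    rw [ha0] at htel_f htel_g
    calc |(∫ x in t..(a N), f ω m x) - Δ * ∑ i ∈ Finset.range N, f ω m (a i)|
        = |∑ i ∈ Finset.range N, ((∫ x in a i..a (i + 1), f ω m x) - Δ * f ω m (a i))| := by
          rw [Finset.sum_sub_distrib, htel_f, ← Finset.mul_sum]
      _ ≤ ∑ i ∈ Finset.range N, |(∫ x in a i..a (i + 1), f ω m x) - Δ * f ω m (a i)| :=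
          Finset.abs_sum_le_sum_abs _ _
      _ ≤ ∑ i ∈ Finset.range N, Δ * ∫ x in a i..a (i + 1), g ω r m x := by
          refine Finset.sum_le_sum fun i _ => ?_
          have h := key_interval (m := m) hω hr (h0 i) (hle i)
          rw [hstep i] at h
          exact h
      _ = Δ * ∫ x in t..(a N), g ω r m x := by rw [← Finset.mul_sum, htel_g]
      _ ≤ Δ * ∫ x in Ioi (0:ℝ), g ω r m x := by
          refine mul_le_mul_of_nonneg_left ?_ hΔ.le
          rw [intervalIntegral.integral_of_le (htaN N)]
          refine setIntegral_mono_set (integrableOn_g hω hr) ?_ ?_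
          · exact (ae_restrict_iff' measurableSet_Ioi).mpr
              (ae_of_all _ fun x hx => g_nonneg hω hr hx.le)
          · exact HasSubset.Subset.eventuallyLE fun x hx => lt_of_le_of_lt ht hx.1
      _ = Δ * Ig := by rw [integral_g hω hr]
  have hsum : Summable (fun i : ℕ => f ω m (t + i * Δ)) := summable_f hω hΔ ht htΔ
  have h2 : Tendsto (fun N => ∑ i ∈ Finset.range N, f ω m (a i)) atTop (𝓝 S) :=
    hsum.hasSum.tendsto_sum_nat
  have hintf : IntegrableOn (f ω m) (Ioi t) := (integrableOn_f hω).mono_set (Ioi_subset_Ioi ht)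
  have hb : Tendsto (fun N : ℕ => a N) atTop atTop := by
    simp only [hadef]
    exact tendsto_atTop_add_const_left _ t (tendsto_natCast_atTop_atTop.atTop_mul_const hΔ)
  have h1 : Tendsto (fun N : ℕ => ∫ x in t..(a N), f ω m x) atTop
      (𝓝 (∫ x in Ioi t, f ω m x)) :=
    intervalIntegral_tendsto_integral_Ioi t hintf hb
  have main : |(∫ x in Ioi t, f ω m x) - Δ * S| ≤ Δ * Ig :=
    le_of_tendsto (h1.sub (h2.const_mul Δ)).abs (Eventually.of_forall key)
  have hsplit : (∫ x in (0:ℝ)..t, f ω m x) + (∫ x in Ioi t, f ω m x) = 1 := by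
    rw [intervalIntegral.integral_of_le ht, ← integral_f (m := m) hω,
      ← setIntegral_union (Ioc_disjoint_Ioi le_rfl) measurableSet_Ioi
        ((integrableOn_f hω).mono_set Ioc_subset_Ioi_self) hintf,
      Ioc_union_Ioi_eq_Ioi ht]
  have hbound0 : 0 ≤ ∫ x in (0:ℝ)..t, f ω m x :=
    intervalIntegral.integral_nonneg ht (fun u hu => f_nonneg hω hu.1)
  have hboundt : (∫ x in (0:ℝ)..t, f ω m x) ≤ Δ * M1 := by
    have hfb : ∀ x ∈ Icc (0:ℝ) t, f ω m x ≤ M1 := by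
      intro x hx
      have hx0 : 0 ≤ x := hx.1
      have hxΔ : x ≤ Δ := hx.2.trans htΔ
      have hp : x ^ (m + 1) ≤ Δ ^ (m + 1) := pow_le_pow_left₀ hx0 hxΔ _
      have he : Real.exp (-ω * x) ≤ 1 := Real.exp_le_one_iff.mpr (by nlinarith)
      have hfacpos : (0:ℝ) < (Nat.factorial (m + 1) : ℝ) := by positivity
      rw [hM1def]
      unfold f
      rw [div_le_div_iff_of_pos_right hfacpos]
      calc ω ^ (m + 2) * (x ^ (m + 1) * Real.exp (-ω * x))
          ≤ ω ^ (m + 2) * (Δ ^ (m + 1) * 1) := by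
            refine mul_le_mul_of_nonneg_left ?_ (by positivity)
            exact mul_le_mul hp he (Real.exp_pos _).le (by positivity)
        _ = ω ^ (m + 2) * Δ ^ (m + 1) := by ring
    calc (∫ x in (0:ℝ)..t, f ω m x) ≤ ∫ _x in (0:ℝ)..t, M1 :=
          intervalIntegral.integral_mono_on ht (cont_f.intervalIntegrable _ _)
            intervalIntegrable_const hfb
      _ = t * M1 := by rw [intervalIntegral.integral_const, smul_eq_mul, sub_zero]
      _ ≤ Δ * M1 := by
          refine mul_le_mul_of_nonneg_right (htΔ.trans_eq rfl) ?_
          rw [hM1def]; positivity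
  have habs : |Δ * S - 1| ≤ Δ * Ig + Δ * M1 := by
    have e1 : Δ * S - 1 = ((Δ * S - ∫ x in Ioi t, f ω m x))
        + (-(∫ x in (0:ℝ)..t, f ω m x)) := by rw [← hsplit]; ring
    rw [e1]
    calc |(Δ * S - ∫ x in Ioi t, f ω m x) + (-(∫ x in (0:ℝ)..t, f ω m x))|
        ≤ |Δ * S - ∫ x in Ioi t, f ω m x| + |(-(∫ x in (0:ℝ)..t, f ω m x))| := abs_add_le _ _
      _ ≤ Δ * Ig + Δ * M1 := by
          rw [abs_neg, abs_of_nonneg hbound0, abs_sub_comm]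
          exact add_le_add main hboundt
  have e2 : S - 1 / Δ = (Δ * S - 1) / Δ := by
    rw [eq_div_iff hΔ.ne', sub_mul, one_div, inv_mul_cancel₀ hΔ.ne']
    ring
  rw [e2, abs_div, abs_of_pos hΔ, div_le_iff₀ hΔ]
  calc |Δ * S - 1| ≤ Δ * Ig + Δ * M1 := habs
    _ = (Ig + M1) * Δ := by ring

lemma eps_tendsto (hω : 0 < ω) (hΔ : 0 < Δ) :
    Tendsto (fun m : ℕ =>
      (ω * Real.sqrt ((m : ℝ) + 1) / (2 * ((m : ℝ) + 1)) + ω / (2 * Real.sqrt ((m : ℝ) + 1)))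
        + ω ^ (m + 2) * Δ ^ (m + 1) / (Nat.factorial (m + 1))) atTop (𝓝 0) := by
  have hs : Tendsto (fun m : ℕ => Real.sqrt ((m : ℝ) + 1)) atTop atTop := by
    have h := (tendsto_rpow_atTop (by norm_num : (0:ℝ) < 1 / 2)).comp
      (tendsto_atTop_add_const_right atTop (1:ℝ) tendsto_natCast_atTop_atTop)
    refine h.congr fun m => ?_
    exact (Real.sqrt_eq_rpow _).symm
  have hinv : Tendsto (fun m : ℕ => (Real.sqrt ((m : ℝ) + 1))⁻¹) atTop (𝓝 0) :=
    hs.inv_tendsto_atTop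
  have hA : Tendsto (fun m : ℕ => ω * (Real.sqrt ((m : ℝ) + 1))⁻¹) atTop (𝓝 0) := by
    simpa using hinv.const_mul ω
  have h1 : ∀ m : ℕ, ω * (Real.sqrt ((m : ℝ) + 1))⁻¹
      = ω * Real.sqrt ((m : ℝ) + 1) / (2 * ((m : ℝ) + 1)) + ω / (2 * Real.sqrt ((m : ℝ) + 1)) := by
    intro m
    have hmp : (0:ℝ) < (m : ℝ) + 1 := by positivity
    set s : ℝ := Real.sqrt ((m : ℝ) + 1) with hsdef
    have hsp : 0 < s := Real.sqrt_pos.mpr hmp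
    have hss : s * s = (m : ℝ) + 1 := Real.mul_self_sqrt hmp.le
    rw [← hss]
    field_simp
    ring
  have h2 : Tendsto (fun m : ℕ => ω ^ (m + 2) * Δ ^ (m + 1) / (Nat.factorial (m + 1)))
      atTop (𝓝 0) := by
    have hb := FloorSemiring.tendsto_pow_div_factorial_atTop (K := ℝ) (ω * Δ)
    have hb2 := (tendsto_add_atTop_iff_nat 1).mpr hb
    have hb3 : Tendsto (fun m : ℕ => ω * ((ω * Δ) ^ (m + 1) / (Nat.factorial (m + 1))))
        atTop (𝓝 0) := by simpa using hb2.const_mul ω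
    refine hb3.congr fun m => ?_
    rw [mul_pow]
    ring
  have := (hA.add h2).congr (fun m => by rw [h1 m])
  simpa using this

end ErlangAux

open ErlangAux in
/-- The function `t ↦ ∑_{i=0}^∞ f_{W_ℓ}(t + iΔ)`, where `f_{W_ℓ}` is the Erlang(ℓ, ω)
density, converges pointwise on `[0, Δ)` to the constant `1/Δ` as `ℓ → ∞`. -/
theorem erlang_wrapped_density_tendsto (ω Δ : ℝ) (hω : 0 < ω) (hΔ : 0 < Δ) :
    ∀ t ∈ Set.Ico (0 : ℝ) Δ,
      Tendsto (fun ℓ : ℕ =>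
          ∑' i : ℕ, ω ^ ℓ * (t + i * Δ) ^ (ℓ - 1) * Real.exp (-ω * (t + i * Δ)) /
            (Nat.factorial (ℓ - 1)))
        atTop (nhds (1 / Δ)) := by
  intro t ht
  obtain ⟨ht0, htΔ⟩ := ht
  have key : Tendsto (fun m : ℕ =>
      ∑' i : ℕ, ω ^ (m + 2) * (t + i * Δ) ^ (m + 2 - 1) * Real.exp (-ω * (t + i * Δ)) /
        (Nat.factorial (m + 2 - 1))) atTop (nhds (1 / Δ)) := by
    have hshift : ∀ m : ℕ, (∑' i : ℕ, ω ^ (m + 2) * (t + i * Δ) ^ (m + 2 - 1) *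
        Real.exp (-ω * (t + i * Δ)) / (Nat.factorial (m + 2 - 1)))
          = ∑' i : ℕ, f ω m (t + i * Δ) := by
      intro m
      refine tsum_congr fun i => ?_
      have h21 : m + 2 - 1 = m + 1 := by omega
      rw [h21]
      unfold f
      ring
    rw [tendsto_iff_dist_tendsto_zero]
    refine squeeze_zero (fun m => dist_nonneg) (fun m => ?_) (eps_tendsto hω hΔ)
    rw [Real.dist_eq, hshift m]
    exact abs_bound hω hΔ ht0 htΔ.le m
  exact (tendsto_add_atTop_iff_nat (f := fun ℓ : ℕ =>
    ∑' i : ℕ, ω ^ ℓ * (t + i * Δ) ^ (ℓ - 1) * Real.exp (-ω * (t + i * Δ)) /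
      (Nat.factorial (ℓ - 1))) 2).mp key
end

section
/- The download success probability p_D2D(Δ) = (1/Δ)·Σ_{i=h}^m ((1−e^{−iμΔ})/(iμ))·Π_{j=h,j≠i}^m j/(j−i) tends to 1 as Δ → 0⁺ and to 0 as Δ → ∞, for μ > 0 and integers 1 ≤ h ≤ m. -/
open Real Filter Finset

lemma sum_lagrange_coeff_one (h m : ℕ) (hhm : h ≤ m) :
    ∑ i ∈ Finset.Icc h m, ∏ j ∈ (Finset.Icc h m).erase i,
      (j : ℝ) / ((j : ℝ) - (i : ℝ)) = 1 := by
  have hs : (Finset.Icc h m).Nonempty := ⟨h, by simp [hhm]⟩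
  have hinj : Set.InjOn (fun i : ℕ => (i : ℝ)) (Finset.Icc h m : Set ℕ) :=
    (Nat.cast_injective (R := ℝ)).injOn
  have hsum := Lagrange.sum_basis hinj hs
  have h0 := congrArg (Polynomial.eval 0) hsum
  simp only [Polynomial.eval_finset_sum, Polynomial.eval_one] at h0
  rw [← h0]
  refine Finset.sum_congr rfl fun i hi => ?_
  rw [Lagrange.basis, Polynomial.eval_prod]
  refine Finset.prod_congr rfl fun j hj => ?_
  simp only [Lagrange.basisDivisor, Polynomial.eval_mul, Polynomial.eval_C,
    Polynomial.eval_sub, Polynomial.eval_X]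
  rw [div_eq_mul_inv, show (j : ℝ) - i = -((i : ℝ) - j) from by ring, inv_neg]
  ring

/-- The download success probability
`p_D2D(Δ) = (1/Δ)·∑_{i=h}^m ((1−e^{−iμΔ})/(iμ))·∏_{j≠i} j/(j−i)`
tends to `1` as `Δ → 0⁺` and to `0` as `Δ → ∞`, for `μ > 0` and integers `1 ≤ h ≤ m`. -/
theorem pD2D_limits (μ : ℝ) (hμ : 0 < μ) (h m : ℕ) (h1 : 1 ≤ h) (hhm : h ≤ m) :
    Tendsto (fun Δ : ℝ =>
        (1 / Δ) * ∑ i ∈ Finset.Icc h m,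
          (1 - Real.exp (-(i * μ) * Δ)) / (i * μ) *
            ∏ j ∈ (Finset.Icc h m).erase i, (j : ℝ) / ((j : ℝ) - (i : ℝ)))
      (nhdsWithin 0 (Set.Ioi 0)) (nhds 1) ∧
    Tendsto (fun Δ : ℝ =>
        (1 / Δ) * ∑ i ∈ Finset.Icc h m,
          (1 - Real.exp (-(i * μ) * Δ)) / (i * μ) *
            ∏ j ∈ (Finset.Icc h m).erase i, (j : ℝ) / ((j : ℝ) - (i : ℝ)))
      atTop (nhds 0) := by
  set s := Finset.Icc h m with hsdef
  set c : ℕ → ℝ := fun i => ∏ j ∈ s.erase i, (j : ℝ) / ((j : ℝ) - (i : ℝ)) with hc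
  have ha : ∀ i ∈ s, 0 < (i : ℝ) * μ := by
    intro i hi
    rw [hsdef, Finset.mem_Icc] at hi
    have : (1 : ℝ) ≤ (i : ℝ) := by exact_mod_cast le_trans h1 hi.1
    positivity
  have key : ∀ Δ : ℝ,
      (1 / Δ) * ∑ i ∈ s, (1 - Real.exp (-(i * μ) * Δ)) / (i * μ) * c i
        = ∑ i ∈ s, ((1 - Real.exp (-(i * μ) * Δ)) / Δ) * (c i / ((i : ℝ) * μ)) := by
    intro Δ
    rw [Finset.mul_sum]
    refine Finset.sum_congr rfl fun i hi => ?_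
    ring
  constructor
  · -- limit as Δ → 0⁺
    have hterm : ∀ i ∈ s, Tendsto
        (fun Δ : ℝ => ((1 - Real.exp (-(i * μ) * Δ)) / Δ) * (c i / ((i : ℝ) * μ)))
        (nhdsWithin 0 (Set.Ioi 0)) (nhds (c i)) := by
      intro i hi
      set a : ℝ := (i : ℝ) * μ with hA
      have ha' : 0 < a := ha i hi
      have hd : HasDerivAt (fun Δ : ℝ => 1 - Real.exp (-a * Δ)) a 0 := by
        have h1d : HasDerivAt (fun Δ : ℝ => -a * Δ) (-a) 0 := by
          simpa using (hasDerivAt_id (0 : ℝ)).const_mul (-a)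
        have h2d := h1d.exp
        have h3d := h2d.const_sub 1
        simpa using h3d
      have hslope := hasDerivAt_iff_tendsto_slope.mp hd
      have hslope' : Tendsto (fun Δ : ℝ => (1 - Real.exp (-a * Δ)) / Δ)
          (nhdsWithin 0 (Set.Ioi 0)) (nhds a) := by
        have hmono : nhdsWithin (0 : ℝ) (Set.Ioi 0) ≤ nhdsWithin 0 {(0 : ℝ)}ᶜ :=
          nhdsWithin_mono 0 (fun x hx => ne_of_gt hx)
        refine (hslope.mono_left hmono).congr fun Δ => ?_
        simp [slope_def_field]
      have := hslope'.mul_const (c i / a)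
      have heq : a * (c i / a) = c i := by field_simp
      rw [heq] at this
      exact this
    have hsum := tendsto_finset_sum s hterm
    rw [sum_lagrange_coeff_one h m hhm] at hsum
    exact hsum.congr fun Δ => (key Δ).symm
  · -- limit as Δ → ∞
    have hterm : ∀ i ∈ s, Tendsto
        (fun Δ : ℝ => ((1 - Real.exp (-(i * μ) * Δ)) / Δ) * (c i / ((i : ℝ) * μ)))
        atTop (nhds 0) := by
      intro i hi
      set a : ℝ := (i : ℝ) * μ with hA
      have ha' : 0 < a := ha i hi
      have hexp : Tendsto (fun Δ : ℝ => Real.exp (-a * Δ)) atTop (nhds 0) := by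
        have hb : Tendsto (fun Δ : ℝ => -a * Δ) atTop atBot := by
          have h2 := tendsto_neg_atTop_atBot.comp ((tendsto_id (α := ℝ)).const_mul_atTop ha')
          simpa [Function.comp_def, neg_mul] using h2
        exact Real.tendsto_exp_atBot.comp hb
      have hnum : Tendsto (fun Δ : ℝ => 1 - Real.exp (-a * Δ)) atTop (nhds 1) := by
        simpa using (tendsto_const_nhds (x := (1 : ℝ)) (f := atTop)).sub hexp
      have hinv : Tendsto (fun Δ : ℝ => Δ⁻¹) atTop (nhds (0 : ℝ)) :=
        tendsto_inv_atTop_zero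
      have hmul := (hnum.mul hinv).mul_const (c i / a)
      simp only [mul_zero, one_mul, zero_mul] at hmul
      refine hmul.congr fun Δ => ?_
      ring
    have hsum := tendsto_finset_sum s hterm
    simp only [Finset.sum_const_zero] at hsum
    exact hsum.congr fun Δ => (key Δ).symm
end

section
/- The download cost C_d(Δ) = Mω(ρ_BS + (ρ_D2D·hα/F − ρ_BS)·p_D2D(Δ)), where p_D2D(Δ) = (1/Δ)Σ_{i=h}^m ((1−e^{−iμΔ})/(iμ))Π_{j=h,j≠i}^m j/(j−i), is monotonically increasing in Δ when ρ_BS/ρ_D2D > hα/F, monotonically decreasing when ρ_BS/ρ_D2D < hα/F, and constant when equality holds (for μ > 0). -/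
open Real Finset

lemma prod_Icc_one (n : ℕ) : ∏ x ∈ Icc 1 n, x = n.factorial := by
  induction n with
  | zero => simp
  | succ n ih =>
    rw [← Finset.Ico_add_one_right_eq_Icc, Finset.prod_Ico_succ_top (by omega),
      Finset.Ico_add_one_right_eq_Icc, ih, Nat.factorial_succ, Nat.mul_comm]

lemma prod_Icc_gen (a b : ℕ) (ha : 1 ≤ a) (hab : a - 1 ≤ b) :
    (∏ j ∈ Icc a b, j) * (a-1).factorial = b.factorial := by
  have hsub : Icc 1 (a-1) ⊆ Icc 1 b := Icc_subset_Icc le_rfl hab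
  have hdiff : Icc 1 b \ Icc 1 (a-1) = Icc a b := by
    ext x; simp only [mem_sdiff, mem_Icc]; omega
  have := Finset.prod_sdiff (f := fun x => x) hsub
  rw [hdiff, prod_Icc_one, prod_Icc_one] at this
  exact this

lemma prod_upper (i m : ℕ) (him : i ≤ m) :
    ∏ j ∈ Icc (i+1) m, ((j:ℝ) - (i:ℝ)) = (m - i).factorial := by
  induction m, him using Nat.le_induction with
  | base => simp
  | succ m him ih =>
    rw [← Finset.Ico_add_one_right_eq_Icc, Finset.prod_Ico_succ_top (by omega), Finset.Ico_add_one_right_eq_Icc, ih]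
    have : m + 1 - i = (m - i) + 1 := by omega
    rw [this, Nat.factorial_succ]
    push_cast [Nat.cast_sub him]
    ring

lemma prod_range_shift (k : ℕ) : ∏ l ∈ range k, ((l:ℝ) - (k:ℝ)) = (-1)^k * k.factorial := by
  induction k with
  | zero => simp
  | succ k ih =>
    rw [Finset.prod_range_succ']
    have h1 : ∏ l ∈ range k, ((l:ℝ) + 1 - ((k:ℝ) + 1)) = ∏ l ∈ range k, ((l:ℝ) - k) := by
      apply Finset.prod_congr rfl; intro x _; ring
    push_cast [Nat.factorial_succ]
    rw [h1, ih]
    push_cast; ring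

lemma prod_lower (h k : ℕ) (h1 : 1 ≤ h) :
    ∏ j ∈ Icc h (h + k - 1), ((j:ℝ) - ((h:ℝ) + k)) = (-1)^k * k.factorial := by
  rcases Nat.eq_zero_or_pos k with hk | hk
  · subst hk; rw [Finset.Icc_eq_empty (by omega)]; simp
  · have h2 : Icc h (h + k - 1) = (Icc 0 (k-1)).map (addLeftEmbedding h) := by
      rw [Finset.map_add_left_Icc]; congr 1; omega
    rw [h2, Finset.prod_map]
    have h3 : Icc 0 (k-1) = range k := by ext x; simp only [mem_Icc, mem_range]; omega
    rw [h3, ← prod_range_shift k]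
    apply Finset.prod_congr rfl; intro x _
    simp only [addLeftEmbedding_apply]
    push_cast; ring

noncomputable def cExpr (h m i : ℕ) : ℝ := ∏ j ∈ (Icc h m).erase i, ((j:ℝ) / ((j:ℝ) - (i:ℝ)))

lemma c_formula (h m k : ℕ) (h1 : 1 ≤ h) (hk : h + k ≤ m) :
    cExpr h m (h+k) = (-1)^k * (m.factorial : ℝ) /
      (((h-1).factorial : ℝ) * ((h:ℝ)+(k:ℝ)) * k.factorial * (m-h-k).factorial) := by
  set i := h + k with hi
  have himem : i ∈ Icc h m := by simp only [mem_Icc]; omega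
  rw [cExpr, Finset.prod_div_distrib]
  -- numerator
  have hnum : (i:ℝ) * ∏ j ∈ (Icc h m).erase i, (j:ℝ) = (m.factorial : ℝ) / ((h-1).factorial : ℝ) := by
    rw [Finset.mul_prod_erase _ _ himem]
    have := prod_Icc_gen h m h1 (by omega)
    have hc : ((∏ j ∈ Icc h m, j : ℕ) : ℝ) * ((h-1).factorial : ℝ) = (m.factorial : ℝ) := by
      exact_mod_cast congrArg (Nat.cast : ℕ → ℝ) this
    rw [Nat.cast_prod] at hc
    field_simp at hc ⊢
    linarith [hc]
  -- denominator
  have hsplit : (Icc h m).erase i = Icc h (i-1) ∪ Icc (i+1) m := by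
    ext x; simp only [mem_erase, mem_Icc, mem_union]; omega
  have hdisj : Disjoint (Icc h (i-1)) (Icc (i+1) m) := by
    rw [Finset.disjoint_left]; intro x hx hx'; simp only [mem_Icc] at hx hx'; omega
  have hden : ∏ j ∈ (Icc h m).erase i, ((j:ℝ) - (i:ℝ))
      = ((-1)^k * k.factorial) * ((m - i).factorial : ℝ) := by
    rw [hsplit, Finset.prod_union hdisj]
    have hl := prod_lower h k h1
    have : ∏ j ∈ Icc h (i-1), ((j:ℝ) - (i:ℝ)) = (-1)^k * k.factorial := by
      rw [← hl]; apply Finset.prod_congr (by rw [hi]) (by intro x _; rw [hi]; push_cast; ring)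
    rw [this, prod_upper i m (by omega)]
  -- combine
  have hipos : (0:ℝ) < (i:ℝ) := by
    have : 0 < i := by omega
    exact_mod_cast this
  have hmi : m - i = m - h - k := by omega
  have hiR : ((i:ℕ):ℝ) = (h:ℝ) + (k:ℝ) := by rw [hi]; push_cast; ring
  have hprod : ∏ x ∈ (Icc h m).erase i, (x:ℝ)
      = (m.factorial : ℝ) / (((h-1).factorial : ℝ) * (i:ℝ)) := by
    rw [eq_div_iff (by positivity)]
    field_simp at hnum
    linear_combination hnum
  rw [hden, hmi, hprod, hiR]
  have hf1 : ((h-1).factorial : ℝ) > 0 := by exact_mod_cast Nat.factorial_pos _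
  have hf2 : (k.factorial : ℝ) > 0 := by exact_mod_cast Nat.factorial_pos _
  have hf3 : ((m-h-k).factorial : ℝ) > 0 := by exact_mod_cast Nat.factorial_pos _
  rw [hiR] at hipos
  rcases Nat.even_or_odd k with hk' | hk'
  · rw [hk'.neg_one_pow]; field_simp
  · rw [hk'.neg_one_pow]; field_simp



lemma nat_id (h m k : ℕ) (h1 : 1 ≤ h) (hk : h + k ≤ m) :
    m * ((m-1).choose (h-1)) * ((m-h).choose k) *
      ((h-1).factorial * (k.factorial * (m-h-k).factorial)) = m.factorial := by
  have A := Nat.choose_mul_factorial_mul_factorial (show h-1 ≤ m-1 by omega)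
  have B := Nat.choose_mul_factorial_mul_factorial (show k ≤ m-h by omega)
  rw [show m - 1 - (h - 1) = m - h by omega] at A
  calc m * ((m-1).choose (h-1)) * ((m-h).choose k) *
      ((h-1).factorial * (k.factorial * (m-h-k).factorial))
      = m * ((m-1).choose (h-1) * (h-1).factorial *
          ((m-h).choose k * k.factorial * (m-h-k).factorial)) := by ring
    _ = m * ((m-1).choose (h-1) * (h-1).factorial * (m-h).factorial) := by rw [B]
    _ = m * (m-1).factorial := by rw [A]
    _ = m.factorial := by
        rw [show m = (m-1)+1 by omega, Nat.factorial_succ]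
        simp

lemma term_eq (h m k : ℕ) (h1 : 1 ≤ h) (hk : h + k ≤ m) :
    ((h:ℝ)+(k:ℝ)) * cExpr h m (h+k)
      = (-1)^k * ((m:ℝ) * ((m-1).choose (h-1) : ℕ) * ((m-h).choose k : ℕ)) := by
  rw [c_formula h m k h1 hk]
  have hcast : ((m:ℝ)) * (((m-1).choose (h-1) : ℕ):ℝ) * (((m-h).choose k : ℕ):ℝ) *
      (((h-1).factorial:ℝ) * ((k.factorial:ℝ) * ((m-h-k).factorial:ℝ))) = (m.factorial:ℝ) := by
    exact_mod_cast nat_id h m k h1 hk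
  have hf1 : (0:ℝ) < ((h-1).factorial:ℝ) := by exact_mod_cast Nat.factorial_pos _
  have hf2 : (0:ℝ) < (k.factorial:ℝ) := by exact_mod_cast Nat.factorial_pos _
  have hf3 : (0:ℝ) < ((m-h-k).factorial:ℝ) := by exact_mod_cast Nat.factorial_pos _
  have hhk : (0:ℝ) < (h:ℝ)+(k:ℝ) := by
    have : (0:ℕ) < h + k := by omega
    exact_mod_cast this
  rw [← hcast]
  field_simp

lemma sum_key (h m : ℕ) (h1 : 1 ≤ h) (hhm : h ≤ m) (u : ℝ) :
    ∑ i ∈ Icc h m, (i:ℝ) * cExpr h m i * u^i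
      = (m:ℝ) * ((m-1).choose (h-1) : ℕ) * (u^h * (1-u)^(m-h)) := by
  have hmap : Icc h m = (Icc 0 (m-h)).map (addLeftEmbedding h) := by
    rw [Finset.map_add_left_Icc]; congr 1; omega
  have hrange : Icc 0 (m-h) = range (m-h+1) := by
    ext x; simp only [mem_Icc, mem_range]; omega
  rw [show (1-u) = (-u) + 1 by ring, add_pow]
  conv_lhs => rw [hmap]
  rw [Finset.sum_map, hrange, Finset.mul_sum, Finset.mul_sum]
  apply Finset.sum_congr rfl
  intro k hkmem
  have hk : h + k ≤ m := by
    simp only [mem_range] at hkmem; omega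
  simp only [addLeftEmbedding_apply]
  have ht : ((h+k:ℕ):ℝ) * cExpr h m (h+k)
      = (-1)^k * ((m:ℝ) * ((m-1).choose (h-1) : ℕ) * ((m-h).choose k : ℕ)) := by
    rw [show ((h+k:ℕ):ℝ) = (h:ℝ)+(k:ℝ) by push_cast; ring]
    exact term_eq h m k h1 hk
  calc ((h+k:ℕ):ℝ) * cExpr h m (h+k) * u^(h+k)
      = (((h+k:ℕ):ℝ) * cExpr h m (h+k)) * u^(h+k) := by ring
    _ = ((-1)^k * ((m:ℝ) * ((m-1).choose (h-1) : ℕ) * ((m-h).choose k : ℕ))) * (u^h * u^k) := by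
        rw [ht, pow_add]
    _ = (m:ℝ) * ((m-1).choose (h-1) : ℕ) * (u^h * ((-u)^k * 1^(m-h-k) * ((m-h).choose k : ℕ))) := by
        rw [neg_pow]; ring



noncomputable def fF (h m : ℕ) (μ : ℝ) (t : ℝ) : ℝ :=
  ∑ i ∈ Icc h m, Real.exp (-((i:ℝ)*μ)*t) * cExpr h m i

noncomputable def GF (h m : ℕ) (μ : ℝ) (Δ : ℝ) : ℝ :=
  ∑ i ∈ Icc h m, (1 - Real.exp (-((i:ℝ)*μ)*Δ))/((i:ℝ)*μ) * cExpr h m i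

lemma GF_zero (h m : ℕ) (μ : ℝ) : GF h m μ 0 = 0 := by
  unfold GF; apply Finset.sum_eq_zero; intro i _; simp

lemma GF_hasDeriv (h m : ℕ) (μ : ℝ) (h1 : 1 ≤ h) (hμ : 0 < μ) (t : ℝ) :
    HasDerivAt (GF h m μ) (fF h m μ t) t := by
  unfold GF fF
  apply HasDerivAt.fun_sum
  intro i hi
  have hipos : (0:ℝ) < (i:ℝ)*μ := by
    have h2 : 1 ≤ i := by simp only [mem_Icc] at hi; omega
    have h3 : (1:ℝ) ≤ (i:ℝ) := by exact_mod_cast h2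
    nlinarith
  have hd1 : HasDerivAt (fun Δ : ℝ => -((i:ℝ)*μ)*Δ) (-((i:ℝ)*μ)) t := by
    simpa using (hasDerivAt_id t).const_mul (-((i:ℝ)*μ))
  have hd3 := ((hd1.exp.const_sub 1).div_const ((i:ℝ)*μ)).mul_const (cExpr h m i)
  convert hd3 using 1
  · rfl
  have hi0 : (i:ℝ) ≠ 0 := by rintro h0; rw [h0, zero_mul] at hipos; exact lt_irrefl _ hipos
  field_simp

lemma fF_hasDeriv (h m : ℕ) (μ : ℝ) (h1 : 1 ≤ h) (hhm : h ≤ m) (t : ℝ) :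
    HasDerivAt (fF h m μ)
      (-μ * ((m:ℝ) * ((m-1).choose (h-1) : ℕ) *
        ((Real.exp (-(μ*t)))^h * (1 - Real.exp (-(μ*t)))^(m-h)))) t := by
  have hd : HasDerivAt (fF h m μ)
      (∑ i ∈ Icc h m, Real.exp (-((i:ℝ)*μ)*t) * -((i:ℝ)*μ) * cExpr h m i) t := by
    unfold fF
    apply HasDerivAt.fun_sum
    intro i _
    have hd1 : HasDerivAt (fun Δ : ℝ => -((i:ℝ)*μ)*Δ) (-((i:ℝ)*μ)) t := by
      simpa using (hasDerivAt_id t).const_mul (-((i:ℝ)*μ))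
    exact hd1.exp.mul_const (cExpr h m i)
  convert hd using 1
  have heq : ∑ i ∈ Icc h m, Real.exp (-((i:ℝ)*μ)*t) * -((i:ℝ)*μ) * cExpr h m i
      = -μ * ∑ i ∈ Icc h m, (i:ℝ) * cExpr h m i * (Real.exp (-(μ*t)))^i := by
    rw [Finset.mul_sum]
    apply Finset.sum_congr rfl
    intro i _
    rw [← Real.exp_nat_mul, show ((i:ℝ)) * (-(μ*t)) = -((i:ℝ)*μ)*t by ring]
    ring
  rw [heq, sum_key h m h1 hhm]

lemma fF_strictAnti (h m : ℕ) (μ : ℝ) (h1 : 1 ≤ h) (hhm : h ≤ m) (hμ : 0 < μ) :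
    StrictAntiOn (fF h m μ) (Set.Ici 0) := by
  apply strictAntiOn_of_deriv_neg (convex_Ici 0)
  · exact (Differentiable.continuous
      (fun t => (fF_hasDeriv h m μ h1 hhm t).differentiableAt)).continuousOn
  · intro t ht
    rw [interior_Ici] at ht
    rw [(fF_hasDeriv h m μ h1 hhm t).deriv]
    have hC : 0 < (m:ℝ) * ((m-1).choose (h-1) : ℕ) := by
      have hc : 0 < (m-1).choose (h-1) := Nat.choose_pos (by omega)
      have hm0 : 0 < m := by omega
      have : (0:ℝ) < ((m-1).choose (h-1) : ℕ) := by exact_mod_cast hc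
      have : (0:ℝ) < (m:ℝ) := by exact_mod_cast hm0
      positivity
    have hu1 : (0:ℝ) < Real.exp (-(μ*t)) := Real.exp_pos _
    have hu2 : Real.exp (-(μ*t)) < 1 := by
      rw [Real.exp_lt_one_iff]
      have := ht.out
      nlinarith
    have h5 : (0:ℝ) < 1 - Real.exp (-(μ*t)) := by linarith
    have h6 : 0 < (Real.exp (-(μ*t)))^h * (1 - Real.exp (-(μ*t)))^(m-h) := by positivity
    nlinarith [mul_pos hμ (mul_pos hC h6)]





lemma GF_div_anti (h m : ℕ) (μ : ℝ) (h1 : 1 ≤ h) (hhm : h ≤ m) (hμ : 0 < μ)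
    {a b : ℝ} (ha : 0 < a) (hab : a < b) :
    GF h m μ b / b < GF h m μ a / a := by
  set fa := fF h m μ a with hfa
  have hψd : ∀ x : ℝ, HasDerivAt (fun y => GF h m μ y - fa * y) (fF h m μ x - fa) x := by
    intro x
    have h2 : HasDerivAt (fun y : ℝ => fa * y) fa x := by
      simpa using (hasDerivAt_id x).const_mul fa
    exact (GF_hasDeriv h m μ h1 hμ x).sub h2
  have hcont : Continuous (fun y => GF h m μ y - fa * y) :=
    Differentiable.continuous (fun x => (hψd x).differentiableAt)
  have hFanti := fF_strictAnti h m μ h1 hhm hμ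
  have mono1 : StrictMonoOn (fun y => GF h m μ y - fa * y) (Set.Icc 0 a) := by
    apply strictMonoOn_of_deriv_pos (convex_Icc 0 a) hcont.continuousOn
    intro x hx
    rw [interior_Icc] at hx
    rw [(hψd x).deriv]
    have : fa < fF h m μ x := hFanti (le_of_lt hx.1) (le_of_lt (lt_trans hx.1 hx.2)) hx.2
    linarith
  have anti2 : StrictAntiOn (fun y => GF h m μ y - fa * y) (Set.Icc a b) := by
    apply strictAntiOn_of_deriv_neg (convex_Icc a b) hcont.continuousOn
    intro x hx
    rw [interior_Icc] at hx
    rw [(hψd x).deriv]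
    have : fF h m μ x < fa := hFanti (le_of_lt ha) (le_of_lt (lt_trans ha hx.1)) hx.1
    linarith
  have P1 : 0 < GF h m μ a - fa * a := by
    have := mono1 (Set.mem_Icc.2 ⟨le_rfl, le_of_lt ha⟩)
      (Set.mem_Icc.2 ⟨le_of_lt ha, le_rfl⟩) ha
    simpa [GF_zero] using this
  have P2 : GF h m μ b - fa * b < GF h m μ a - fa * a := by
    exact anti2 (Set.mem_Icc.2 ⟨le_rfl, le_of_lt hab⟩)
      (Set.mem_Icc.2 ⟨le_of_lt hab, le_rfl⟩) hab
  rw [div_lt_div_iff₀ (lt_trans ha hab) ha]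
  nlinarith [mul_pos P1 (sub_pos.2 hab)]


/-- The download cost `C_d(Δ) = Mω(ρ_BS + (ρ_D2D·hα/F − ρ_BS)·p_D2D(Δ))` is strictly
increasing in `Δ` on `(0,∞)` when `ρ_BS/ρ_D2D > hα/F`, strictly decreasing when
`ρ_BS/ρ_D2D < hα/F`, and constant when equality holds (for `μ > 0`). -/
theorem download_cost_monotone (M ω F α ρBS ρD2D μ : ℝ)
    (hM : 0 < M) (hω : 0 < ω) (hF : 0 < F) (hα : 0 < α)
    (hρBS : 0 < ρBS) (hρD2D : 0 < ρD2D) (hμ : 0 < μ)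
    (h m : ℕ) (h1 : 1 ≤ h) (hhm : h ≤ m)
    (pD2D Cd : ℝ → ℝ)
    (hp : ∀ Δ, pD2D Δ = (1 / Δ) * ∑ i ∈ Finset.Icc h m,
        (1 - Real.exp (-((i : ℝ) * μ) * Δ)) / ((i : ℝ) * μ) *
          ∏ j ∈ (Finset.Icc h m).erase i, (j : ℝ) / ((j : ℝ) - (i : ℝ)))
    (hCd : ∀ Δ, Cd Δ = M * ω * (ρBS + (ρD2D * (h * α) / F - ρBS) * pD2D Δ)) :
    (ρBS / ρD2D > h * α / F → StrictMonoOn Cd (Set.Ioi 0)) ∧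
    (ρBS / ρD2D < h * α / F → StrictAntiOn Cd (Set.Ioi 0)) ∧
    (ρBS / ρD2D = h * α / F → ∀ Δ₁ ∈ Set.Ioi (0 : ℝ), ∀ Δ₂ ∈ Set.Ioi (0 : ℝ),
      Cd Δ₁ = Cd Δ₂) := by
  have hpG : ∀ Δ : ℝ, pD2D Δ = GF h m μ Δ / Δ := by
    intro Δ
    rw [hp Δ]
    rw [show (∑ i ∈ Finset.Icc h m,
        (1 - Real.exp (-((i : ℝ) * μ) * Δ)) / ((i : ℝ) * μ) *
          ∏ j ∈ (Finset.Icc h m).erase i, (j : ℝ) / ((j : ℝ) - (i : ℝ))) = GF h m μ Δ from rfl]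
    ring
  have hpanti : ∀ a b : ℝ, 0 < a → a < b → pD2D b < pD2D a := by
    intro a b ha hab
    rw [hpG a, hpG b]
    exact GF_div_anti h m μ h1 hhm hμ ha hab
  set K := ρD2D * ((h:ℝ) * α) / F - ρBS with hK
  refine ⟨?_, ?_, ?_⟩
  · intro hyp
    have hKneg : K < 0 := by
      rw [hK]
      have h2 : (h:ℝ) * α / F * ρD2D < ρBS := (lt_div_iff₀ hρD2D).mp hyp
      have h3 : ρD2D * ((h:ℝ) * α) / F = (h:ℝ) * α / F * ρD2D := by ring
      linarith [h3 ▸ h2]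
    intro a ha b hb hab
    rw [hCd a, hCd b]
    have hpab := hpanti a b ha hab
    nlinarith [mul_pos (mul_pos hM hω) (mul_pos (neg_pos.2 hKneg) (sub_pos.2 hpab))]
  · intro hyp
    have hKpos : 0 < K := by
      rw [hK]
      have h2 : ρBS < (h:ℝ) * α / F * ρD2D := (div_lt_iff₀ hρD2D).mp hyp
      have h3 : ρD2D * ((h:ℝ) * α) / F = (h:ℝ) * α / F * ρD2D := by ring
      linarith
    intro a ha b hb hab
    rw [hCd a, hCd b]
    have hpab := hpanti a b ha hab
    nlinarith [mul_pos (mul_pos hM hω) (mul_pos hKpos (sub_pos.2 hpab))]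
  · intro hyp
    have hK0 : K = 0 := by
      rw [hK]
      rw [div_eq_div_iff (ne_of_gt hρD2D) (ne_of_gt hF)] at hyp
      have h3 : ρD2D * ((h:ℝ) * α) / F = ρBS := by
        rw [div_eq_iff (ne_of_gt hF)]
        linarith
      linarith
    intro Δ₁ _ Δ₂ _
    rw [hCd Δ₁, hCd Δ₂, hK0]
    ring
end

section
/- For any [m,h,r] linear code with m = n, minimum distance d ≥ 2, α = F/k, β = α, γ_D2D = rα, and satisfying the locality Singleton bound d ≤ n − k − ⌈k/r⌉ + 2 with h ≥ k and d = m − h + 1, the instantaneous-repair cost (ρ_D2D/F)(γ_D2D m μ + Mω h α) is at least ρ_D2D(2μ + Mω), with equality achieved by 2-replication (m = 2, k = h = r = 1, α = F). -/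
/-- For any `[m,h,r]` linear code with `m = n`, minimum distance `d ≥ 2`, `α = F/k`,
`β = α`, `γ_D2D = rα`, satisfying the locality Singleton bound `d ≤ n − k − ⌈k/r⌉ + 2` with
`h ≥ k` and `d = m − h + 1`, the instantaneous-repair cost
`(ρ_D2D/F)(γ_D2D m μ + Mω h α)` is at least `ρ_D2D(2μ + Mω)`, with equality achieved by
2-replication (`m = 2`, `k = h = r = 1`, `α = F`). -/
theorem instantaneous_cost_lower_bound (μ M ω ρD2D F : ℝ)
    (hμ : 0 < μ) (hM : 0 < M) (hω : 0 < ω) (hρ : 0 < ρD2D) (hF : 0 < F)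
    (m k h r d : ℕ) (hk : 1 ≤ k) (hr : 1 ≤ r) (hhk : k ≤ h) (hhm : h ≤ m)
    (hd : d = m - h + 1) (hd2 : 2 ≤ d)
    (hSingleton : (d : ℤ) ≤ (m : ℤ) - k - ⌈(k : ℝ) / (r : ℝ)⌉ + 2)
    (α β γ : ℝ) (hα : α = F / k) (hβ : β = α) (hγ : γ = r * α) :
    ρD2D * (2 * μ + M * ω) ≤ ρD2D / F * (γ * m * μ + M * ω * (h * α)) ∧
    (m = 2 ∧ k = 1 ∧ h = 1 ∧ r = 1 →
      ρD2D / F * (γ * m * μ + M * ω * (h * α)) = ρD2D * (2 * μ + M * ω)) := by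
  have hk0 : (0:ℝ) < k := by exact_mod_cast hk
  have hr0 : (0:ℝ) < r := by exact_mod_cast hr
  have hr1 : (1:ℝ) ≤ r := by exact_mod_cast hr
  have hceil : (k:ℝ)/r ≤ (⌈(k:ℝ)/r⌉ : ℝ) := Int.le_ceil _
  have hd2' : (2:ℤ) ≤ d := by exact_mod_cast hd2
  have hm1 : (k:ℤ) + ⌈(k:ℝ)/r⌉ ≤ m := by linarith
  have hm1' : (k:ℝ) + (⌈(k:ℝ)/r⌉ : ℝ) ≤ m := by exact_mod_cast hm1
  have hmR : (k:ℝ) + (k:ℝ)/r ≤ m := by linarith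
  have hdiv : (r:ℝ) * ((k:ℝ)/r) = k := by field_simp
  have hrm : 2*(k:ℝ) ≤ r*m := by nlinarith [mul_le_mul_of_nonneg_left hmR (le_of_lt hr0)]
  have hhkR : (k:ℝ) ≤ h := by exact_mod_cast hhk
  constructor
  · subst hγ hβ hα
    have h1 : 2*F ≤ r*(F/k)*m := by
      rw [show (r:ℝ)*(F/k)*m = ((r:ℝ)*m*F)/k by ring, le_div_iff₀ hk0]
      nlinarith
    have h2 : F ≤ (h:ℝ)*(F/k) := by
      rw [mul_div_assoc', le_div_iff₀ hk0]
      nlinarith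
    have key : F*(2*μ + M*ω) ≤ (r*(F/k)*m*μ + M*ω*((h:ℝ)*(F/k))) := by
      nlinarith [mul_le_mul_of_nonneg_right h1 hμ.le,
        mul_le_mul_of_nonneg_left h2 (mul_pos hM hω).le]
    calc ρD2D * (2 * μ + M * ω) = ρD2D/F * (F*(2*μ + M*ω)) := by
          field_simp
      _ ≤ _ := by
          apply mul_le_mul_of_nonneg_left key
          positivity
  · rintro ⟨hm2, hk1, hh1, hr'⟩
    subst hm2 hk1 hh1 hr' hγ hβ hα
    push_cast
    field_simp
end

section
/- For r = m−1, the quantity m·γ_D2D for an MSR code, namely m·(F/h)·(m−1)/(m−h), subject to real constraints m ≥ 2, 1 ≤ h < m, is minimized at m = 2, h = 1 with minimum value 2F; simultaneously hα = F, so the overall instantaneous cost (ρ_D2D/F)(γ m μ + Mω h α) attains its minimum ρ_D2D(2μ + Mω) at 2-replication. -/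
/-- For `r = m−1`, the quantity `m·γ_D2D` for an MSR code, namely `m·(F/h)·(m−1)/(m−h)`,
subject to real constraints `m ≥ 2`, `1 ≤ h < m`, is minimized at `m = 2, h = 1` with minimum
value `2F`; simultaneously `hα = F`, so the overall instantaneous cost
`(ρ_D2D/F)(γ m μ + Mω h α)` attains its minimum `ρ_D2D(2μ + Mω)` at 2-replication. -/
theorem msr_instantaneous_min (F μ M ω ρD2D : ℝ)
    (hF : 0 < F) (hμ : 0 < μ) (hM : 0 < M) (hω : 0 < ω) (hρ : 0 < ρD2D) :
    (∀ m h : ℝ, 2 ≤ m → 1 ≤ h → h < m →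
      2 * F ≤ m * (F / h * ((m - 1) / (m - h))) ∧
      h * (F / h) = F ∧
      ρD2D * (2 * μ + M * ω) ≤
        ρD2D / F * ((F / h * ((m - 1) / (m - h))) * m * μ + M * ω * (h * (F / h)))) ∧
    ((2 : ℝ) * (F / 1 * (((2 : ℝ) - 1) / ((2 : ℝ) - 1))) = 2 * F) ∧
    (ρD2D / F * ((F / 1 * (((2 : ℝ) - 1) / ((2 : ℝ) - 1))) * 2 * μ +
        M * ω * ((1 : ℝ) * (F / 1))) = ρD2D * (2 * μ + M * ω)) := by
  have key : ∀ m h : ℝ, 2 ≤ m → 1 ≤ h → h < m →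
      2 * F ≤ m * (F / h * ((m - 1) / (m - h))) := by
    intro m h hm hh hhm
    have hh0 : 0 < h := by linarith
    have hmh : 0 < m - h := by linarith
    rw [div_mul_div_comm, mul_div_assoc, show m * (F * ((m - 1) / (h * (m - h)))) =
      m * F * (m - 1) / (h * (m - h)) by ring, le_div_iff₀ (by positivity)]
    nlinarith [sq_nonneg (m - 2*h), sq_nonneg (m - 2)]
  refine ⟨fun m h hm hh hhm => ?_, by norm_num, ?_⟩
  · have h1 := key m h hm hh hhm
    have hh0 : 0 < h := by linarith
    have hα : h * (F / h) = F := by field_simp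
    refine ⟨h1, hα, ?_⟩
    rw [hα]
    have h2 : 2 * F * μ ≤ (F / h * ((m - 1) / (m - h))) * m * μ := by
      nlinarith [h1]
    have h3 : ρD2D * (2 * μ + M * ω) = ρD2D / F * (2 * F * μ + M * ω * F) := by
      field_simp
    rw [h3]
    apply mul_le_mul_of_nonneg_left _ (by positivity)
    linarith
  · field_simp
end
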